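/- Let G be a finite simple graph with 11 vertices, 21 edges, and minimum degree at least 3, and suppose that for every pair of distinct vertices a, b the induced subgraph G−a,b has at least 12 edges. Then the multiset of vertex degrees of G is one of (6,4^6,3^4), (5^4,4,3^6), (5^3,4^3,3^5), (5^2,4^5,3^4), (5,4^7,3^3), or (4^9,3^2). -/

import Mathlib

open scoped Classical

open Finset in
private lemma key_multiset_aux {V : Type*} [Fintype V] (f : V → ℕ) (L : List ℕ)
    (h : ∀ n, (Finset.univ.filter (fun v => f v = n)).card = L.count n) :
    (Finset.univ : Finset V).val.map f = (↑L : Multiset ℕ) := by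
  ext n
  have h2 : (Finset.univ.filter (fun v => n = f v)).card = L.count n := by
    rw [← h n]; congr 1; ext v; simp [eq_comm]
  rw [Multiset.count_map, Multiset.coe_count, ← h2]
  rfl

open Finset in
private lemma key2_aux {V : Type*} [Fintype V] (f : V → ℕ) (L : List ℕ)
    (hrange : ∀ v, 3 ≤ f v ∧ f v ≤ 7)
    (h : ∀ d, 3 ≤ d → d ≤ 7 → (Finset.univ.filter (fun v => f v = d)).card = L.count d)
    (h0 : ∀ d, d < 3 ∨ 7 < d → d ∉ L) :
    (Finset.univ : Finset V).val.map f = (↑L : Multiset ℕ) := by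
  apply key_multiset_aux
  intro n
  by_cases hn : 3 ≤ n ∧ n ≤ 7
  · exact h n hn.1 hn.2
  · rw [List.count_eq_zero.mpr (h0 n (by omega))]
    rw [Finset.card_eq_zero, Finset.filter_eq_empty_iff]
    intro v _ hv
    have := hrange v
    omega

open Finset in
private lemma deg_pair_le_aux {V : Type*} [Fintype V] (G : SimpleGraph V)
    (hE : G.edgeFinset.card = 21)
    (hdel : ∀ a b : V, a ≠ b →
      12 ≤ (G.induce ({a, b}ᶜ : Set V)).edgeFinset.card)
    {a b : V} (hab : a ≠ b) : G.degree a + G.degree b ≤ 10 := by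
  classical
  set P : Sym2 V → Prop := fun e => a ∉ e ∧ b ∉ e with hP
  have hinj : (G.induce ({a, b}ᶜ : Set V)).edgeFinset.card ≤ (G.edgeFinset.filter P).card := by
    apply Finset.card_le_card_of_injOn (fun e => Sym2.map Subtype.val e)
    · intro e he
      induction e with
      | _ x y =>
        simp only [Finset.mem_coe, SimpleGraph.mem_edgeFinset, SimpleGraph.mem_edgeSet] at he
        simp only [Finset.mem_coe, Finset.mem_filter, SimpleGraph.mem_edgeFinset, Sym2.map_pair_eq,
          SimpleGraph.mem_edgeSet, hP, Sym2.mem_iff]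
        refine ⟨he, ?_, ?_⟩
        · rintro (h | h)
          · exact x.2 (by simp [h.symm])
          · exact y.2 (by simp [h.symm])
        · rintro (h | h)
          · exact x.2 (by simp [h.symm])
          · exact y.2 (by simp [h.symm])
    · intro e _ e' _ h
      exact Sym2.map.injective Subtype.val_injective h
  have h12 := hdel a b hab
  have hsplit := Finset.card_filter_add_card_filter_not (s := G.edgeFinset) (p := P)
  have hsub : G.incidenceFinset a ∪ G.incidenceFinset b ⊆
      G.edgeFinset.filter (fun e => ¬ P e) := by
    intro e he
    rcases Finset.mem_union.mp he with h | h <;>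
      rw [SimpleGraph.mem_incidenceFinset] at h <;>
      simp only [Finset.mem_filter, SimpleGraph.mem_edgeFinset, hP, not_and_or, not_not] <;>
      [exact ⟨h.1, Or.inl h.2⟩; exact ⟨h.1, Or.inr h.2⟩]
  have hinter : (G.incidenceFinset a ∩ G.incidenceFinset b).card ≤ 1 := by
    apply Finset.card_le_one.mpr
    intro e he e' he'
    simp only [Finset.mem_inter, SimpleGraph.mem_incidenceFinset,
      SimpleGraph.mk'_mem_incidenceSet_iff] at he he'
    have h1 : e = s(a, b) := (Sym2.mem_and_mem_iff hab).mp ⟨he.1.2, he.2.2⟩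
    have h2 : e' = s(a, b) := (Sym2.mem_and_mem_iff hab).mp ⟨he'.1.2, he'.2.2⟩
    rw [h1, h2]
  have hunion := Finset.card_union_add_card_inter (G.incidenceFinset a) (G.incidenceFinset b)
  have hca := G.card_incidenceFinset_eq_degree a
  have hcb := G.card_incidenceFinset_eq_degree b
  have hle2 : G.degree a + G.degree b ≤ (G.edgeFinset.filter (fun e => ¬ P e)).card + 1 := by
    have := Finset.card_le_card hsub
    omega
  omega

/-- Let G be a finite simple graph with 11 vertices, 21 edges, and
minimum degree at least 3, such that for every pair of distinct vertices a, b
the induced subgraph G−a,b has at least 12 edges. Then the degree multiset of G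
is one of (6,4^6,3^4), (5^4,4,3^6), (5^3,4^3,3^5), (5^2,4^5,3^4), (5,4^7,3^3),
or (4^9,3^2). -/
theorem stmt_10 {V : Type*} [Fintype V] (G : SimpleGraph V)
    (hV : Fintype.card V = 11) (hE : G.edgeFinset.card = 21)
    (hmin : ∀ v : V, 3 ≤ G.degree v)
    (hdel : ∀ a b : V, a ≠ b →
      12 ≤ (G.induce ({a, b}ᶜ : Set V)).edgeFinset.card) :
    (Finset.univ : Finset V).val.map (fun v => G.degree v) =
        (↑[3, 3, 3, 3, 4, 4, 4, 4, 4, 4, 6] : Multiset ℕ) ∨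
    (Finset.univ : Finset V).val.map (fun v => G.degree v) =
        (↑[3, 3, 3, 3, 3, 3, 4, 5, 5, 5, 5] : Multiset ℕ) ∨
    (Finset.univ : Finset V).val.map (fun v => G.degree v) =
        (↑[3, 3, 3, 3, 3, 4, 4, 4, 5, 5, 5] : Multiset ℕ) ∨
    (Finset.univ : Finset V).val.map (fun v => G.degree v) =
        (↑[3, 3, 3, 3, 4, 4, 4, 4, 4, 5, 5] : Multiset ℕ) ∨
    (Finset.univ : Finset V).val.map (fun v => G.degree v) =
        (↑[3, 3, 3, 4, 4, 4, 4, 4, 4, 4, 5] : Multiset ℕ) ∨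
    (Finset.univ : Finset V).val.map (fun v => G.degree v) =
        (↑[3, 3, 4, 4, 4, 4, 4, 4, 4, 4, 4] : Multiset ℕ) := by
  classical
  have hle : ∀ a b : V, a ≠ b → G.degree a + G.degree b ≤ 10 :=
    fun a b hab => deg_pair_le_aux G hE hdel hab
  have hsum : ∑ v, G.degree v = 42 := by
    rw [SimpleGraph.sum_degrees_eq_twice_card_edges, hE]
  have h7 : ∀ v, G.degree v ≤ 7 := by
    intro v
    obtain ⟨w, hw⟩ := Fintype.exists_ne_of_one_lt_card (by omega) v
    have := hle w v hw
    have := hmin w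
    omega
  have hrange : ∀ v, 3 ≤ G.degree v ∧ G.degree v ≤ 7 := fun v => ⟨hmin v, h7 v⟩
  have hN : ∀ d, (Finset.univ.filter (fun v => G.degree v = d)).card =
      (fun d => (Finset.univ.filter (fun v => G.degree v = d)).card) d := fun d => rfl
  set N : ℕ → ℕ := fun d => (Finset.univ.filter (fun v => G.degree v = d)).card
  clear_value N
  have hmem : ∀ v : V, v ∈ (Finset.univ : Finset V) →
      G.degree v ∈ ({3,4,5,6,7} : Finset ℕ) := by
    intro v _
    have := hmin v; have := h7 v
    simp only [Finset.mem_insert, Finset.mem_singleton]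
    omega
  have hexp : ∀ g : ℕ → ℕ, ∑ d ∈ ({3,4,5,6,7} : Finset ℕ), g d =
      g 3 + g 4 + g 5 + g 6 + g 7 := by
    intro g
    rw [show ({3,4,5,6,7} : Finset ℕ) = insert 3 (insert 4 (insert 5 (insert 6 {7}))) from rfl]
    rw [Finset.sum_insert (by decide), Finset.sum_insert (by decide),
      Finset.sum_insert (by decide), Finset.sum_insert (by decide), Finset.sum_singleton]
    ring
  have hfib : N 3 + N 4 + N 5 + N 6 + N 7 = 11 := by
    have := Finset.card_eq_sum_card_fiberwise hmem
    simp only [hN] at this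
    rw [hexp] at this
    rw [Finset.card_univ, hV] at this
    omega
  have hws : 3 * N 3 + 4 * N 4 + 5 * N 5 + 6 * N 6 + 7 * N 7 = 42 := by
    have h1 := Finset.sum_fiberwise_of_maps_to hmem (fun v => G.degree v)
    have h2 : ∀ d : ℕ, ∑ v ∈ Finset.univ.filter (fun v => G.degree v = d), G.degree v =
        N d * d := by
      intro d
      rw [Finset.sum_congr rfl (fun v hv => (Finset.mem_filter.mp hv).2), Finset.sum_const,
        smul_eq_mul, hN d]
    rw [Finset.sum_congr rfl (fun d _ => h2 d), hexp, hsum] at h1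
    omega
  have h7z : N 7 = 0 := by
    rw [← hN 7, Finset.card_eq_zero, Finset.filter_eq_empty_iff]
    intro v _ hv
    have hall : ∀ w ∈ Finset.univ.erase v, G.degree w = 3 := by
      intro w hw
      have hne : w ≠ v := (Finset.mem_erase.mp hw).1
      have := hle w v hne
      have := hmin w
      omega
    have hsplit := Finset.add_sum_erase Finset.univ (fun v => G.degree v) (Finset.mem_univ v)
    rw [Finset.sum_congr rfl hall, Finset.sum_const, smul_eq_mul,
      Finset.card_erase_of_mem (Finset.mem_univ v), Finset.card_univ, hV] at hsplit
    rw [hsum] at hsplit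
    omega
  have h6le : N 6 ≤ 1 := by
    rw [← hN 6]
    apply Finset.card_le_one.mpr
    intro a ha b hb
    by_contra hne
    have h6a := (Finset.mem_filter.mp ha).2
    have h6b := (Finset.mem_filter.mp hb).2
    have := hle a b hne
    omega
  have h65 : N 6 = 0 ∨ N 5 = 0 := by
    by_contra h
    push_neg at h
    obtain ⟨h6, h5⟩ := h
    rw [← hN 6] at h6
    rw [← hN 5] at h5
    obtain ⟨a, ha⟩ := Finset.card_pos.mp (Nat.pos_of_ne_zero h6)
    obtain ⟨b, hb⟩ := Finset.card_pos.mp (Nat.pos_of_ne_zero h5)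
    have h6a := (Finset.mem_filter.mp ha).2
    have h5b := (Finset.mem_filter.mp hb).2
    have hne : a ≠ b := fun h => by rw [h] at h6a; omega
    have := hle a b hne
    omega
  have hcases : (N 6 = 1 ∧ N 5 = 0 ∧ N 4 = 6 ∧ N 3 = 4) ∨
      (N 6 = 0 ∧ N 5 = 4 ∧ N 4 = 1 ∧ N 3 = 6) ∨
      (N 6 = 0 ∧ N 5 = 3 ∧ N 4 = 3 ∧ N 3 = 5) ∨
      (N 6 = 0 ∧ N 5 = 2 ∧ N 4 = 5 ∧ N 3 = 4) ∨
      (N 6 = 0 ∧ N 5 = 1 ∧ N 4 = 7 ∧ N 3 = 3) ∨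
      (N 6 = 0 ∧ N 5 = 0 ∧ N 4 = 9 ∧ N 3 = 2) := by
    rcases h65 with h | h
    · have h5 : N 5 = 0 ∨ N 5 = 1 ∨ N 5 = 2 ∨ N 5 = 3 ∨ N 5 = 4 := by omega
      rcases h5 with h5 | h5 | h5 | h5 | h5
      · exact Or.inr (Or.inr (Or.inr (Or.inr (Or.inr (by omega)))))
      · exact Or.inr (Or.inr (Or.inr (Or.inr (Or.inl (by omega)))))
      · exact Or.inr (Or.inr (Or.inr (Or.inl (by omega))))
      · exact Or.inr (Or.inr (Or.inl (by omega)))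
      · exact Or.inr (Or.inl (by omega))
    · have h6 : N 6 = 0 ∨ N 6 = 1 := by omega
      rcases h6 with h6 | h6
      · exact Or.inr (Or.inr (Or.inr (Or.inr (Or.inr (by omega)))))
      · exact Or.inl (by omega)
  rcases hcases with ⟨e6, e5, e4, e3⟩ | ⟨e6, e5, e4, e3⟩ | ⟨e6, e5, e4, e3⟩ |
    ⟨e6, e5, e4, e3⟩ | ⟨e6, e5, e4, e3⟩ | ⟨e6, e5, e4, e3⟩
  · refine Or.inl (key2_aux _ _ hrange ?_ ?_)
    · intro d hd1 hd2
      interval_cases d <;> simp only [hN, e3, e4, e5, e6, h7z] <;> decide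
    · intro d hd h; simp only [List.mem_cons, List.not_mem_nil, or_false] at h; omega
  · refine Or.inr (Or.inl (key2_aux _ _ hrange ?_ ?_))
    · intro d hd1 hd2
      interval_cases d <;> simp only [hN, e3, e4, e5, e6, h7z] <;> decide
    · intro d hd h; simp only [List.mem_cons, List.not_mem_nil, or_false] at h; omega
  · refine Or.inr (Or.inr (Or.inl (key2_aux _ _ hrange ?_ ?_)))
    · intro d hd1 hd2
      interval_cases d <;> simp only [hN, e3, e4, e5, e6, h7z] <;> decide
    · intro d hd h; simp only [List.mem_cons, List.not_mem_nil, or_false] at h; omega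
  · refine Or.inr (Or.inr (Or.inr (Or.inl (key2_aux _ _ hrange ?_ ?_))))
    · intro d hd1 hd2
      interval_cases d <;> simp only [hN, e3, e4, e5, e6, h7z] <;> decide
    · intro d hd h; simp only [List.mem_cons, List.not_mem_nil, or_false] at h; omega
  · refine Or.inr (Or.inr (Or.inr (Or.inr (Or.inl (key2_aux _ _ hrange ?_ ?_)))))
    · intro d hd1 hd2
      interval_cases d <;> simp only [hN, e3, e4, e5, e6, h7z] <;> decide
    · intro d hd h; simp only [List.mem_cons, List.not_mem_nil, or_false] at h; omega
  · refine Or.inr (Or.inr (Or.inr (Or.inr (Or.inr (key2_aux _ _ hrange ?_ ?_)))))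
    · intro d hd1 hd2
      interval_cases d <;> simp only [hN, e3, e4, e5, e6, h7z] <;> decide
    · intro d hd h; simp only [List.mem_cons, List.not_mem_nil, or_false] at h; omega
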